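/- arXiv:2512.22798 — 5 statements merged into one kernel-verified Lean document; each statement's English description precedes it below -/
import Mathlib

section
/- Let 1/10 < σ < 1/2 and let t₁,…,tₙ be nonnegative reals with t₁+⋯+tₙ = 1. Then at least one of the following holds: (1) some tᵢ ≥ 1/2 + σ; (2) there is a partition {1,…,n} = S ⊔ T with 1/2 − σ < Σ_{i∈S} tᵢ ≤ Σ_{i∈T} tᵢ < 1/2 + σ; (3) there exist distinct indices i, j, k with 2σ ≤ tᵢ ≤ tⱼ ≤ t_k ≤ 1/2 − σ and tᵢ+tⱼ, tᵢ+t_k, tⱼ+t_k all at least 1/2 + σ. Moreover, if σ > 1/6 then case (3) cannot occur. -/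
lemma sort3 {n : ℕ} (σ : ℝ) (t : Fin n → ℝ) (i j k : Fin n)
    (hij : i ≠ j) (hik : i ≠ k) (hjk : j ≠ k)
    (b1 : 2 * σ ≤ t i) (b2 : 2 * σ ≤ t j) (b3 : 2 * σ ≤ t k)
    (u1 : t i ≤ 1 / 2 - σ) (u2 : t j ≤ 1 / 2 - σ) (u3 : t k ≤ 1 / 2 - σ)
    (p1 : 1 / 2 + σ ≤ t i + t j) (p2 : 1 / 2 + σ ≤ t i + t k)
    (p3 : 1 / 2 + σ ≤ t j + t k) :
    ∃ a b c : Fin n, a ≠ b ∧ a ≠ c ∧ b ≠ c ∧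
      2 * σ ≤ t a ∧ t a ≤ t b ∧ t b ≤ t c ∧ t c ≤ 1 / 2 - σ ∧
      1 / 2 + σ ≤ t a + t b ∧ 1 / 2 + σ ≤ t a + t c ∧ 1 / 2 + σ ≤ t b + t c := by
  rcases le_total (t i) (t j) with h1 | h1 <;>
  rcases le_total (t i) (t k) with h2 | h2 <;>
  rcases le_total (t j) (t k) with h3 | h3
  · exact ⟨i, j, k, hij, hik, hjk, b1, h1, h3, u3, p1, p2, p3⟩
  · exact ⟨i, k, j, hik, hij, hjk.symm, b1, h2, h3, u2, p2, p1, by linarith⟩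
  · exact ⟨i, j, k, hij, hik, hjk, b1, h1, h3, u3, p1, p2, p3⟩
  · exact ⟨k, i, j, hik.symm, hjk.symm, hij, b3, h2, h1, u2, by linarith, by linarith, p1⟩
  · exact ⟨j, i, k, hij.symm, hjk, hik, b2, h1, h2, u3, by linarith, p3, p2⟩
  · exact ⟨j, i, k, hij.symm, hjk, hik, b2, h1, h2, u3, by linarith, p3, p2⟩
  · exact ⟨j, k, i, hjk, hij.symm, hik.symm, b2, h3, h2, u1, p3, by linarith, by linarith⟩
  · exact ⟨k, j, i, hjk.symm, hik.symm, hij.symm, b3, h3, h1, u1, by linarith, by linarith, by linarith⟩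

/-- Lemma 2.2 (combinatorial lemma of Polymath): for `1/10 < σ < 1/2` and nonnegative
reals `t₁,…,tₙ` summing to `1`, one of the three listed conditions holds; moreover if
`σ > 1/6` the third condition cannot occur. -/
theorem stmt_1 (σ : ℝ) (hσ1 : 1 / 10 < σ) (hσ2 : σ < 1 / 2) (n : ℕ) (hn : 0 < n)
    (t : Fin n → ℝ) (ht : ∀ i, 0 ≤ t i) (hsum : ∑ i, t i = 1) :
    ((∃ i, 1 / 2 + σ ≤ t i) ∨
      (∃ S : Finset (Fin n),
        1 / 2 - σ < ∑ i ∈ S, t i ∧ ∑ i ∈ S, t i ≤ ∑ i ∈ Sᶜ, t i ∧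
          ∑ i ∈ Sᶜ, t i < 1 / 2 + σ) ∨
      (∃ i j k : Fin n, i ≠ j ∧ i ≠ k ∧ j ≠ k ∧
        2 * σ ≤ t i ∧ t i ≤ t j ∧ t j ≤ t k ∧ t k ≤ 1 / 2 - σ ∧
        1 / 2 + σ ≤ t i + t j ∧ 1 / 2 + σ ≤ t i + t k ∧ 1 / 2 + σ ≤ t j + t k)) ∧
    (1 / 6 < σ →
      ¬ ∃ i j k : Fin n, i ≠ j ∧ i ≠ k ∧ j ≠ k ∧
        2 * σ ≤ t i ∧ t i ≤ t j ∧ t j ≤ t k ∧ t k ≤ 1 / 2 - σ ∧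
        1 / 2 + σ ≤ t i + t j ∧ 1 / 2 + σ ≤ t i + t k ∧ 1 / 2 + σ ≤ t j + t k) := by
  have hσ0 : 0 < σ := by linarith
  constructor
  · by_contra hcon
    push_neg at hcon
    obtain ⟨h1, h2, h3⟩ := hcon
    -- complement sums
    have hcompl : ∀ S : Finset (Fin n), ∑ i ∈ Sᶜ, t i = 1 - ∑ i ∈ S, t i := by
      intro S
      have := Finset.sum_add_sum_compl S t
      rw [hsum] at this
      linarith
    -- gap property
    have hgap : ∀ S : Finset (Fin n), ∑ i ∈ S, t i ≤ 1 / 2 - σ ∨ 1 / 2 + σ ≤ ∑ i ∈ S, t i := by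
      intro S
      by_contra hc
      push_neg at hc
      obtain ⟨hl, hr⟩ := hc
      rcases le_total (∑ i ∈ S, t i) (∑ i ∈ Sᶜ, t i) with hle | hle
      · have := h2 S hl hle
        rw [hcompl] at this
        linarith
      · have h1' : 1 / 2 - σ < ∑ i ∈ Sᶜ, t i := by rw [hcompl]; linarith
        have h2' : ∑ i ∈ Sᶜ, t i ≤ ∑ i ∈ Sᶜᶜ, t i := by rw [compl_compl]; exact hle
        have := h2 Sᶜ h1' h2'
        rw [compl_compl] at this
        linarith
    -- every element is at most 1/2 - σ
    have hE : ∀ i, t i ≤ 1 / 2 - σ := by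
      intro i
      have hg := hgap {i}
      rw [Finset.sum_singleton] at hg
      rcases hg with h | h
      · exact h
      · exact absurd h (not_le.mpr (h1 i))
    -- maximal subset with sum ≤ 1/2 - σ
    obtain ⟨S, hS, hSmax⟩ := Finset.exists_max_image
      ((Finset.univ : Finset (Finset (Fin n))).filter (fun S => ∑ i ∈ S, t i ≤ 1 / 2 - σ))
      (fun S => ∑ i ∈ S, t i)
      ⟨∅, by simp; linarith⟩
    have ha : ∑ i ∈ S, t i ≤ 1 / 2 - σ := (Finset.mem_filter.mp hS).2
    have hmax : ∀ T : Finset (Fin n), ∑ i ∈ T, t i ≤ 1 / 2 - σ → ∑ i ∈ T, t i ≤ ∑ i ∈ S, t i :=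
      fun T h => hSmax T (Finset.mem_filter.mpr ⟨Finset.mem_univ T, h⟩)
    have hca : 1 / 2 + σ ≤ 1 - ∑ i ∈ S, t i := by
      rcases hgap Sᶜ with h | h <;> rw [hcompl] at h <;> linarith
    -- positive elements outside S
    set U := Sᶜ.filter (fun i => 0 < t i) with hUdef
    have hUsum : ∑ i ∈ U, t i = 1 - ∑ i ∈ S, t i := by
      have hsplit := Finset.sum_filter_add_sum_filter_not Sᶜ (fun i => 0 < t i) t
      have hz : ∑ i ∈ Sᶜ.filter (fun i => ¬ 0 < t i), t i = 0 :=
        Finset.sum_eq_zero (fun i hi => le_antisymm (not_lt.mp (Finset.mem_filter.mp hi).2) (ht i))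
      rw [hz, add_zero] at hsplit
      rw [hUdef, hsplit, hcompl]
    have hUb : ∀ i ∈ U, 1 / 2 + σ ≤ ∑ x ∈ S, t x + t i := by
      intro i hiU
      have hic := Finset.mem_filter.mp hiU
      have hiS : i ∉ S := Finset.mem_compl.mp hic.1
      have hins : ∑ x ∈ insert i S, t x = t i + ∑ x ∈ S, t x := Finset.sum_insert hiS
      rcases hgap (insert i S) with h | h
      · have := hmax _ h
        rw [hins] at this
        linarith [hic.2]
      · rw [hins] at h
        linarith
    -- U has exactly two elements
    have hub : U.card ≤ 2 := by
      by_contra hc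
      push_neg at hc
      obtain ⟨W, hWU, hWcard⟩ := Finset.exists_subset_card_eq (s := U) (n := 3) (by omega)
      have hlb : ∀ i ∈ W, 1 / 2 + σ - ∑ x ∈ S, t x ≤ t i := by
        intro i hi
        have := hUb i (hWU hi)
        linarith
      have h3s := Finset.card_nsmul_le_sum W t (1 / 2 + σ - ∑ x ∈ S, t x) hlb
      rw [hWcard] at h3s
      have hWle : ∑ i ∈ W, t i ≤ ∑ i ∈ U, t i :=
        Finset.sum_le_sum_of_subset_of_nonneg hWU (fun i _ _ => ht i)
      have h3s' : (3 : ℝ) * (1 / 2 + σ - ∑ x ∈ S, t x) ≤ ∑ i ∈ W, t i := by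
        have : (3 : ℕ) • (1 / 2 + σ - ∑ x ∈ S, t x) = (3 : ℝ) * (1 / 2 + σ - ∑ x ∈ S, t x) := by
          simp [nsmul_eq_mul]
        linarith [h3s, this.symm.le, this.le]
      rw [hUsum] at hWle
      linarith
    have hlb2 : 2 ≤ U.card := by
      by_contra hc
      push_neg at hc
      have hle1 : (U.card : ℝ) ≤ 1 := by exact_mod_cast Nat.lt_succ_iff.mp hc
      have h := Finset.sum_le_card_nsmul U t (1 / 2 - σ) (fun i _ => hE i)
      rw [nsmul_eq_mul] at h
      rw [hUsum] at h
      nlinarith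
    have hcard2 : U.card = 2 := le_antisymm hub hlb2
    obtain ⟨j, k, hjkne, hUeq⟩ := Finset.card_eq_two.mp hcard2
    have hjU : j ∈ U := by rw [hUeq]; simp
    have hkU : k ∈ U := by rw [hUeq]; simp
    have hjS : j ∉ S := Finset.mem_compl.mp (Finset.mem_filter.mp hjU).1
    have hkS : k ∉ S := Finset.mem_compl.mp (Finset.mem_filter.mp hkU).1
    have hjksum : t j + t k = 1 - ∑ i ∈ S, t i := by
      rw [hUeq, Finset.sum_pair hjkne] at hUsum
      exact hUsum
    have hjlb : 1 / 2 + σ - ∑ x ∈ S, t x ≤ t j := by linarith [hUb j hjU]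
    have hklb : 1 / 2 + σ - ∑ x ∈ S, t x ≤ t k := by linarith [hUb k hkU]
    -- find a third large element inside S
    obtain ⟨V, hV, hVmax⟩ := Finset.exists_max_image
      (S.powerset.filter (fun V => (∑ x ∈ V, t x) + t j ≤ 1 / 2 - σ))
      (fun V => ∑ x ∈ V, t x)
      ⟨∅, by simp; linarith [hE j]⟩
    have hVS : V ⊆ S := Finset.mem_powerset.mp (Finset.mem_filter.mp hV).1
    have hVle : (∑ x ∈ V, t x) + t j ≤ 1 / 2 - σ := (Finset.mem_filter.mp hV).2
    have hsdiff : ∑ x ∈ S \ V, t x + ∑ x ∈ V, t x = ∑ x ∈ S, t x := Finset.sum_sdiff hVS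
    have hpos : 0 < ∑ x ∈ S \ V, t x := by
      have := hUb j hjU
      linarith
    have hexi : ∃ i ∈ S \ V, 0 < t i := by
      by_contra hc
      push_neg at hc
      have : ∑ x ∈ S \ V, t x ≤ 0 := Finset.sum_nonpos hc
      linarith
    obtain ⟨i, hiSV, hipos⟩ := hexi
    have hiS : i ∈ S := (Finset.mem_sdiff.mp hiSV).1
    have hiV : i ∉ V := (Finset.mem_sdiff.mp hiSV).2
    have hinsV : ∑ x ∈ insert i V, t x = t i + ∑ x ∈ V, t x := Finset.sum_insert hiV
    -- maximality of V forces insert i V to violate the bound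
    have hbig : 1 / 2 - σ < t i + ∑ x ∈ V, t x + t j := by
      by_contra hc
      push_neg at hc
      have hmem : insert i V ∈
          S.powerset.filter (fun V => (∑ x ∈ V, t x) + t j ≤ 1 / 2 - σ) := by
        refine Finset.mem_filter.mpr ⟨Finset.mem_powerset.mpr ?_, ?_⟩
        · exact Finset.insert_subset hiS hVS
        · rw [hinsV]; linarith
      have := hVmax _ hmem
      rw [hinsV] at this
      linarith
    have hjins : j ∉ insert i V := by
      intro hmem
      rcases Finset.mem_insert.mp hmem with h | h
      · exact hjS (h ▸ hiS)
      · exact hjS (hVS h)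
    have hgapW := hgap (insert j (insert i V))
    rw [Finset.sum_insert hjins, hinsV] at hgapW
    have hi2σ : 1 / 2 + σ - ((∑ x ∈ V, t x) + t j) ≤ t i := by
      rcases hgapW with h | h
      · linarith
      · linarith
    have hi2σ' : 2 * σ ≤ t i := by linarith
    have hijne : i ≠ j := fun h => hjS (h ▸ hiS)
    have hikne : i ≠ k := fun h => hkS (h ▸ hiS)
    have hij_sum : 1 / 2 + σ ≤ t i + t j := by
      rcases hgap {i, j} with h | h <;> rw [Finset.sum_pair hijne] at h
      · linarith
      · exact h
    have hik_sum : 1 / 2 + σ ≤ t i + t k := by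
      rcases hgap {i, k} with h | h <;> rw [Finset.sum_pair hikne] at h
      · linarith
      · exact h
    have hjk_sum : 1 / 2 + σ ≤ t j + t k := by linarith
    have hj2σ : 2 * σ ≤ t j := by linarith
    have hk2σ : 2 * σ ≤ t k := by linarith
    obtain ⟨a', b', c', hab, hac, hbc, q1, q2, q3, q4, q5, q6, q7⟩ :=
      sort3 σ t i j k hijne hikne hjkne hi2σ' hj2σ hk2σ (hE i) (hE j) (hE k)
        hij_sum hik_sum hjk_sum
    have := h3 a' b' c' hab hac hbc q1 q2 q3 q4 q5 q6
    linarith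
  · rintro hσ6 ⟨i, j, k, _, _, _, _, hij, hjk, hk, _, _, hsum3⟩
    linarith
end

section
/- Let 7/24 < σ < 1/3 and let t₁,…,tₙ be nonnegative real numbers with t₁+⋯+tₙ = 1. Then either some tᵢ ≥ σ, or there exists a subset S ⊆ {1,…,n} such that 1 − 3σ < Σ_{i∈S} tᵢ ≤ 1/4. -/
/-- Lemma 2.3 (Fouvry–Iwaniec): for `7/24 < σ < 1/3` and nonnegative reals `t₁,…,tₙ`
summing to `1`, either some `tᵢ ≥ σ` or some subsum lies in `(1 − 3σ, 1/4]`. -/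
theorem stmt_2 (σ : ℝ) (hσ1 : 7 / 24 < σ) (hσ2 : σ < 1 / 3) (n : ℕ) (hn : 0 < n)
    (t : Fin n → ℝ) (ht : ∀ i, 0 ≤ t i) (hsum : ∑ i, t i = 1) :
    (∃ i, σ ≤ t i) ∨
      ∃ S : Finset (Fin n), 1 - 3 * σ < ∑ i ∈ S, t i ∧ ∑ i ∈ S, t i ≤ 1 / 4 := by
  by_cases hA : ∃ i, σ ≤ t i
  · exact Or.inl hA
  push_neg at hA
  right
  by_cases hB : ∃ i, 1 - 3 * σ < t i ∧ t i ≤ 1 / 4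
  · obtain ⟨i, h1, h2⟩ := hB
    exact ⟨{i}, by simpa using h1, by simpa using h2⟩
  push_neg at hB
  set Sm : Finset (Fin n) := Finset.univ.filter (fun i => t i ≤ 1 - 3 * σ) with hSmdef
  by_cases hC : 1 - 3 * σ < ∑ i ∈ Sm, t i
  · -- take a cardinality-minimal subset of Sm with sum > 1 - 3σ
    obtain ⟨T, hT, hmin⟩ := Finset.exists_min_image
      (Sm.powerset.filter (fun T => 1 - 3 * σ < ∑ i ∈ T, t i)) Finset.card
      ⟨Sm, by simp [hC]⟩
    simp only [Finset.mem_filter, Finset.mem_powerset] at hT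
    obtain ⟨hTSm, hTgt⟩ := hT
    refine ⟨T, hTgt, ?_⟩
    have hσpos : 0 < 1 - 3 * σ := by linarith
    have hne : T.Nonempty := by
      rcases T.eq_empty_or_nonempty with h | h
      · exfalso; rw [h] at hTgt; simp at hTgt; linarith
      · exact h
    obtain ⟨i, hi⟩ := hne
    have hi' : t i ≤ 1 - 3 * σ := by
      have := hTSm hi
      rw [hSmdef, Finset.mem_filter] at this
      exact this.2
    have herase : ∑ j ∈ T.erase i, t j ≤ 1 - 3 * σ := by
      by_contra h
      push_neg at h
      have hmem : T.erase i ∈ Sm.powerset.filter (fun T => 1 - 3 * σ < ∑ i ∈ T, t i) := by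
        refine Finset.mem_filter.mpr ⟨Finset.mem_powerset.mpr ?_, h⟩
        exact (Finset.erase_subset _ _).trans hTSm
      have hcle := hmin _ hmem
      have : (T.erase i).card < T.card := Finset.card_erase_lt_of_mem hi
      omega
    have hsum' : ∑ j ∈ T.erase i, t j + t i = ∑ j ∈ T, t j := Finset.sum_erase_add T t hi
    linarith
  · -- large elements: complement of Sm
    push_neg at hC
    set L : Finset (Fin n) := Smᶜ with hLdef
    have hLsum : ∑ i ∈ L, t i = 1 - ∑ i ∈ Sm, t i := by
      have := Finset.sum_compl_add_sum Sm t
      rw [hsum] at this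
      linarith
    have hLge : 3 * σ ≤ ∑ i ∈ L, t i := by
      rw [hLsum]; linarith
    have hσpos : (0:ℝ) < σ := by linarith
    have hLbig : ∀ i ∈ L, 1 / 4 < t i := by
      intro i hi
      rw [hLdef, Finset.mem_compl, hSmdef, Finset.mem_filter] at hi
      push_neg at hi
      exact hB i (hi (Finset.mem_univ i))
    have hLlt : ∀ i ∈ L, t i < σ := fun i _ => hA i
    have hLne : L.Nonempty := by
      rcases L.eq_empty_or_nonempty with h | h
      · exfalso; rw [h] at hLge; simp at hLge; linarith
      · exact h
    have hcard : (3:ℝ) < L.card := by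
      have hlt : ∑ i ∈ L, t i < ∑ _i ∈ L, σ := Finset.sum_lt_sum_of_nonempty hLne hLlt
      rw [Finset.sum_const, nsmul_eq_mul] at hlt
      nlinarith
    have hcard3 : 3 ≤ L.card := by exact_mod_cast hcard.le
    obtain ⟨T, hTL, hTcard⟩ := Finset.exists_subset_card_eq hcard3
    have hTne : T.Nonempty := Finset.card_pos.mp (by omega)
    have hTgt : (3:ℝ) / 4 < ∑ i ∈ T, t i := by
      have := Finset.sum_lt_sum_of_nonempty hTne (fun i hi => hLbig i (hTL hi))
      rw [Finset.sum_const, hTcard, nsmul_eq_mul] at this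
      push_cast at this
      linarith
    have hTlt : ∑ i ∈ T, t i < 3 * σ := by
      have := Finset.sum_lt_sum_of_nonempty hTne (fun i hi => hLlt i (hTL hi))
      rw [Finset.sum_const, hTcard, nsmul_eq_mul] at this
      push_cast at this
      linarith
    refine ⟨Tᶜ, ?_, ?_⟩
    · have := Finset.sum_compl_add_sum T t
      rw [hsum] at this
      linarith
    · have := Finset.sum_compl_add_sum T t
      rw [hsum] at this
      linarith
end

section
/- Let ν be a positive integer and Q, R ≥ 2 be reals. Define G_ν(Q,R) = {(q,r) ∈ [1,Q]×[1,R] : q,r positive integers, gcd(q,r)=1, ω(q) ≤ ν, ω(r) ≤ ν}, where ω counts distinct prime factors. Then there exists a partition of G_ν(Q,R) into at most (2 log(3QR))^{ν²} subsets G* such that for any two pairs (q₁,r₁), (q₂,r₂) in the same subset G*, one has gcd(q₁,r₂) = gcd(q₂,r₁) = 1. -/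
open Finset

/-- Membership in the set `G_ν(Q,R)` of Fouvry's splitting lemma: pairs `(q,r)` of
positive integers with `q ≤ Q`, `r ≤ R`, `gcd(q,r) = 1`, and at most `ν` distinct
prime factors in each coordinate. -/
def MemG (ν : ℕ) (Q R : ℝ) (p : ℕ × ℕ) : Prop :=
  1 ≤ p.1 ∧ (p.1 : ℝ) ≤ Q ∧ 1 ≤ p.2 ∧ (p.2 : ℝ) ≤ R ∧ Nat.Coprime p.1 p.2 ∧
    p.1.primeFactors.card ≤ ν ∧ p.2.primeFactors.card ≤ ν


private lemma two_pow_le_choose (u : ℕ) : 2 ^ u ≤ Nat.choose (2 * u) u := by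
  induction u with
  | zero => simp
  | succ n ih =>
    have h1 : Nat.choose (2*n+1) (n+1) = Nat.choose (2*n) n + Nat.choose (2*n) (n+1) :=
      Nat.choose_succ_succ _ _
    have h2 : Nat.choose (2*n) n ≤ Nat.choose (2*n+1) n := Nat.choose_le_choose _ (by omega)
    have h3 : Nat.choose (2*(n+1)) (n+1) = Nat.choose (2*n+1) n + Nat.choose (2*n+1) (n+1) := by
      rw [show 2*(n+1) = (2*n+1)+1 by ring]
      exact Nat.choose_succ_succ _ _
    have h4 : 2^(n+1) = 2^n + 2^n := by ring
    omega

private lemma primes_card_le (M : ℕ) :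
    ((Finset.range (M+1)).filter Nat.Prime).card ≤ (M+1)/2 := by
  have h : ((Finset.range (M+1)).filter Nat.Prime).card ≤ (Finset.range ((M+1)/2)).card := by
    apply Finset.card_le_card_of_injOn (fun p => (p-1)/2)
    · intro a ha
      simp only [Finset.coe_filter, Set.mem_setOf_eq, Finset.mem_coe, Finset.mem_filter, Finset.mem_range] at ha ⊢
      have := ha.2.two_le
      omega
    · intro a ha b hb hab
      simp only [Finset.coe_filter, Set.mem_setOf_eq, Finset.mem_range] at ha hb
      have ha2 := ha.2.two_le
      have hb2 := hb.2.two_le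
      simp only at hab
      rcases eq_or_ne a 2 with rfl | ha'
      · rcases eq_or_ne b 2 with rfl | hb'
        · rfl
        · obtain ⟨l, hl⟩ := hb.2.odd_of_ne_two hb'
          omega
      · obtain ⟨k, hk⟩ := ha.2.odd_of_ne_two ha'
        rcases eq_or_ne b 2 with rfl | hb'
        · omega
        · obtain ⟨l, hl⟩ := hb.2.odd_of_ne_two hb'
          omega
  simpa using h

open scoped Classical in
private noncomputable def psiAux (Q R : ℝ) (w : ℕ → Finset ℕ) (a b : ℕ) : ℕ :=
  if Q < (b : ℝ) ∨ R < (a : ℝ) then 2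
  else if h : (w a \ w b).Nonempty then 3 + (w a \ w b).min' h else 2

open scoped Classical in
private noncomputable def EAux (ν : ℕ) (Q R : ℝ) (w : ℕ → Finset ℕ) (p : ℕ × ℕ)
    (i j : Fin ν) : ℕ :=
  if (i : ℕ) < p.1.primeFactors.toList.length ∧ (j : ℕ) < p.2.primeFactors.toList.length then
    psiAux Q R w (p.1.primeFactors.toList.getD i 1) (p.2.primeFactors.toList.getD j 1)
  else if (i : ℕ) = 0 ∧ (j : ℕ) = 0 ∧ p.1.primeFactors.toList.length = 0 then 1 else 0

private lemma psi_ge_two (Q R : ℝ) (w : ℕ → Finset ℕ) (a b : ℕ) :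
    2 ≤ psiAux Q R w a b := by
  simp only [psiAux]
  split_ifs <;> omega

private lemma EAux_lt (ν t : ℕ) (Q R : ℝ) (w : ℕ → Finset ℕ)
    (hw : ∀ a : ℕ, a.Prime → (a:ℝ) ≤ Q → (a:ℝ) ≤ R → w a ⊆ Finset.range t)
    (p : ℕ × ℕ) (hp : MemG ν Q R p) (i j : Fin ν) : EAux ν Q R w p i j < t + 3 := by
  obtain ⟨q, r⟩ := p
  obtain ⟨hq, hqQ, hr, hrR, hco, hsq, hsr⟩ := hp
  simp only [EAux]
  split_ifs with h1 h2
  · simp only [psiAux]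
    split_ifs with c1 c2
    · omega
    · -- 3 + min' < t + 3
      push_neg at c1
      have hamem : q.primeFactors.toList.getD (i:ℕ) 1 ∈ q.primeFactors := by
        rw [List.getD_eq_getElem _ _ h1.1]
        exact Finset.mem_toList.mp (List.getElem_mem h1.1)
      have haprime : (q.primeFactors.toList.getD (i:ℕ) 1).Prime :=
        Nat.prime_of_mem_primeFactors hamem
      have haQ : ((q.primeFactors.toList.getD (i:ℕ) 1 : ℕ):ℝ) ≤ Q := by
        refine le_trans ?_ hqQ
        exact_mod_cast Nat.le_of_dvd (by omega) (Nat.dvd_of_mem_primeFactors hamem)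
      have hsub := (Finset.mem_sdiff.mp (Finset.min'_mem _ c2)).1
      have hlt := hw _ haprime haQ c1.2 hsub
      simp only [Finset.mem_range] at hlt
      omega
    · omega
  · omega
  · omega

private lemma key_coprime (ν : ℕ) (hν : 0 < ν) (Q R : ℝ) (w : ℕ → Finset ℕ)
    (hdiff : ∀ a b : ℕ, a.Prime → b.Prime → (a:ℝ) ≤ Q → (a:ℝ) ≤ R → (b:ℝ) ≤ Q → (b:ℝ) ≤ R →
      a ≠ b → (w a \ w b).Nonempty)
    (p₁ p₂ : ℕ × ℕ) (h₁ : MemG ν Q R p₁) (h₂ : MemG ν Q R p₂)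
    (hE : ∀ i j, EAux ν Q R w p₁ i j = EAux ν Q R w p₂ i j) :
    Nat.Coprime p₁.1 p₂.2 := by
  obtain ⟨q₁, r₁⟩ := p₁
  obtain ⟨q₂, r₂⟩ := p₂
  obtain ⟨hq₁, hq₁Q, hr₁, hr₁R, hco₁, hsq₁, hsr₁⟩ := h₁
  obtain ⟨hq₂, hq₂Q, hr₂, hr₂R, hco₂, hsq₂, hsr₂⟩ := h₂
  simp only at hq₁ hq₁Q hr₁ hr₁R hco₁ hsq₁ hsr₁ hq₂ hq₂Q hr₂ hr₂R hco₂ hsq₂ hsr₂ ⊢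
  by_contra hnc
  obtain ⟨p, hp, hpq, hpr⟩ := Nat.Prime.not_coprime_iff_dvd.mp hnc
  set L1 := q₁.primeFactors.toList with hL1
  set L2 := r₁.primeFactors.toList with hL2
  set L3 := q₂.primeFactors.toList with hL3
  set L4 := r₂.primeFactors.toList with hL4
  have hlen1 : L1.length ≤ ν := by rw [hL1, Finset.length_toList]; exact hsq₁
  have hlen2 : L2.length ≤ ν := by rw [hL2, Finset.length_toList]; exact hsr₁
  have hlen3 : L3.length ≤ ν := by rw [hL3, Finset.length_toList]; exact hsq₂
  have hlen4 : L4.length ≤ ν := by rw [hL4, Finset.length_toList]; exact hsr₂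
  have hp1 : p ∈ L1 := Finset.mem_toList.mpr (Nat.mem_primeFactors.mpr ⟨hp, hpq, by omega⟩)
  have hp4 : p ∈ L4 := Finset.mem_toList.mpr (Nat.mem_primeFactors.mpr ⟨hp, hpr, by omega⟩)
  obtain ⟨i0, hi0, hgi⟩ := List.mem_iff_getElem.mp hp1
  obtain ⟨j0, hj0, hgj⟩ := List.mem_iff_getElem.mp hp4
  have hpQ : (p:ℝ) ≤ Q :=
    le_trans (by exact_mod_cast Nat.le_of_dvd (by omega) hpq) hq₁Q
  have hpR : (p:ℝ) ≤ R :=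
    le_trans (by exact_mod_cast Nat.le_of_dvd (by omega) hpr) hr₂R
  set i : Fin ν := ⟨i0, by omega⟩ with hi
  set j : Fin ν := ⟨j0, by omega⟩ with hj
  have hmain := hE i j
  by_cases hj2 : j0 < L2.length
  · -- pair1 in range at (i0, j0)
    have hgetp1 : L1.getD i0 1 = p := by rw [List.getD_eq_getElem _ _ hi0]; exact hgi
    have hgetp4 : L4.getD j0 1 = p := by rw [List.getD_eq_getElem _ _ hj0]; exact hgj
    set b₁ := L2.getD j0 1 with hb₁
    have h14 : EAux ν Q R w (q₁, r₁) i j = psiAux Q R w p b₁ := by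
      simp only [EAux]
      rw [if_pos ⟨hi0, hj2⟩]
      exact congrArg (fun x => psiAux Q R w x b₁) hgetp1
    have hir2 : i0 < L3.length ∧ j0 < L4.length := by
      by_contra hno
      have hle1 : EAux ν Q R w (q₂, r₂) i j ≤ 1 := by
        simp only [EAux]
        rw [if_neg (by rw [← hL3, ← hL4]; exact hno)]
        split_ifs <;> omega
      have := psi_ge_two Q R w p b₁
      omega
    set a₂ := L3.getD i0 1 with ha₂
    have h24 : EAux ν Q R w (q₂, r₂) i j = psiAux Q R w a₂ p := by
      simp only [EAux]
      rw [if_pos hir2]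
      exact congrArg (fun x => psiAux Q R w a₂ x) hgetp4
    rw [h14, h24] at hmain
    -- facts about b₁ and a₂
    have hb₁mem : b₁ ∈ r₁.primeFactors := by
      rw [hb₁, List.getD_eq_getElem _ _ hj2]
      exact Finset.mem_toList.mp (List.getElem_mem hj2)
    have ha₂mem : a₂ ∈ q₂.primeFactors := by
      rw [ha₂, List.getD_eq_getElem _ _ hir2.1]
      exact Finset.mem_toList.mp (List.getElem_mem hir2.1)
    have hb₁prime : b₁.Prime := Nat.prime_of_mem_primeFactors hb₁mem
    have ha₂prime : a₂.Prime := Nat.prime_of_mem_primeFactors ha₂mem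
    have hb₁R : (b₁:ℝ) ≤ R :=
      le_trans (by exact_mod_cast Nat.le_of_dvd (by omega) (Nat.dvd_of_mem_primeFactors hb₁mem)) hr₁R
    have ha₂Q : (a₂:ℝ) ≤ Q :=
      le_trans (by exact_mod_cast Nat.le_of_dvd (by omega) (Nat.dvd_of_mem_primeFactors ha₂mem)) hq₂Q
    have hpb₁ : p ≠ b₁ := by
      intro h
      have hd : p ∣ Nat.gcd q₁ r₁ :=
        Nat.dvd_gcd hpq (h ▸ Nat.dvd_of_mem_primeFactors hb₁mem)
      rw [hco₁] at hd
      have h1 := Nat.dvd_one.mp hd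
      have h2 := hp.two_le
      omega
    have ha₂p : a₂ ≠ p := by
      intro h
      have hd : p ∣ Nat.gcd q₂ r₂ :=
        Nat.dvd_gcd (h ▸ Nat.dvd_of_mem_primeFactors ha₂mem) hpr
      rw [hco₂] at hd
      have h1 := Nat.dvd_one.mp hd
      have h2 := hp.two_le
      omega
    -- unfold psi
    have hD1 : ¬(Q < (b₁:ℝ) ∨ R < (p:ℝ)) → (w p \ w b₁).Nonempty := by
      intro hc
      push_neg at hc
      exact hdiff p b₁ hp hb₁prime hpQ hpR hc.1 hb₁R hpb₁
    have hD2 : ¬(Q < (p:ℝ) ∨ R < (a₂:ℝ)) → (w a₂ \ w p).Nonempty := by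
      intro hc
      push_neg at hc
      exact hdiff a₂ p ha₂prime hp ha₂Q hc.2 hpQ hpR ha₂p
    simp only [psiAux] at hmain
    by_cases hC1 : Q < (b₁:ℝ) ∨ R < (p:ℝ)
    · rw [if_pos hC1] at hmain
      by_cases hC2 : Q < (p:ℝ) ∨ R < (a₂:ℝ)
      · rcases hC1 with h | h
        · rcases hC2 with h' | h' <;> linarith
        · linarith
      · rw [if_neg hC2, dif_pos (hD2 hC2)] at hmain
        omega
    · have hne1 := hD1 hC1
      rw [if_neg hC1, dif_pos hne1] at hmain
      by_cases hC2 : Q < (p:ℝ) ∨ R < (a₂:ℝ)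
      · rw [if_pos hC2] at hmain
        omega
      · have hne2 := hD2 hC2
        rw [if_neg hC2, dif_pos hne2] at hmain
        have e : (w p \ w b₁).min' hne1 = (w a₂ \ w p).min' hne2 := by omega
        have m1 := Finset.min'_mem _ hne1
        have m2 := Finset.min'_mem _ hne2
        rw [e] at m1
        exact (Finset.mem_sdiff.mp m2).2 (Finset.mem_sdiff.mp m1).1
  · -- pair1 out of range at (i0, j0)
    have h1out : EAux ν Q R w (q₁, r₁) i j = 0 := by
      simp only [EAux]
      rw [if_neg (by rw [← hL1, ← hL2]; rintro ⟨-, h⟩; exact hj2 h)]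
      rw [if_neg (by rw [← hL1]; rintro ⟨-, -, h⟩; omega)]
    have h2out : ¬(i0 < L3.length ∧ j0 < L4.length) := by
      intro hc
      have h24 : EAux ν Q R w (q₂, r₂) i j =
          psiAux Q R w (L3.getD i0 1) (L4.getD j0 1) := by
        simp only [EAux]
        rw [if_pos (by rw [← hL3, ← hL4]; exact hc)]
      have := psi_ge_two Q R w (L3.getD i0 1) (L4.getD j0 1)
      omega
    have hs2 : L3.length ≤ i0 := by
      rcases Nat.lt_or_ge i0 L3.length with h | h
      · exact absurd ⟨h, hj0⟩ h2out
      · exact h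
    by_cases h3pos : 0 < L3.length
    · -- use index (0, L2.length)
      have hj'ν : L2.length < ν := by omega
      have hmain2 := hE ⟨0, hν⟩ ⟨L2.length, hj'ν⟩
      have hE1 : EAux ν Q R w (q₁, r₁) ⟨0, hν⟩ ⟨L2.length, hj'ν⟩ = 0 := by
        simp only [EAux]
        rw [if_neg (by rw [← hL1, ← hL2]; rintro ⟨-, h⟩; omega)]
        rw [if_neg (by rw [← hL1]; rintro ⟨-, -, h⟩; omega)]
      have hE2 : 2 ≤ EAux ν Q R w (q₂, r₂) ⟨0, hν⟩ ⟨L2.length, hj'ν⟩ := by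
        simp only [EAux]
        rw [if_pos (by rw [← hL3, ← hL4]; exact ⟨h3pos, by omega⟩)]
        exact psi_ge_two _ _ _ _ _
      omega
    · -- L3.length = 0 : use (0,0)
      have hmain3 := hE ⟨0, hν⟩ ⟨0, hν⟩
      have hE2 : EAux ν Q R w (q₂, r₂) ⟨0, hν⟩ ⟨0, hν⟩ = 1 := by
        simp only [EAux]
        rw [if_neg (by rw [← hL3]; rintro ⟨h, -⟩; omega)]
        rw [if_pos (by refine ⟨?_, ?_, ?_⟩ <;> first | trivial | (rw [← hL3]; omega))]
      have hE1 : EAux ν Q R w (q₁, r₁) ⟨0, hν⟩ ⟨0, hν⟩ ≠ 1 := by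
        simp only [EAux]
        by_cases h02 : 0 < L2.length
        · rw [if_pos (show _ ∧ _ from ⟨lt_of_le_of_lt (Nat.zero_le i0) (hL1 ▸ hi0), h02⟩)]
          exact ne_of_gt (lt_of_lt_of_le one_lt_two (psi_ge_two _ _ _ _ _))
        · rw [if_neg (by rw [← hL1, ← hL2]; rintro ⟨-, h⟩; omega)]
          rw [if_neg (by rw [← hL1]; rintro ⟨-, -, h⟩; omega)]
          omega
      exact hE1 (hmain3.trans hE2)

/-- Splitting into coprime sets (Fouvry): `G_ν(Q,R)` can be partitioned into at most
`(2 log(3QR))^{ν²}` classes (encoded by a coloring `f` with fewer than `k` colors) so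
that any two pairs in the same class satisfy `gcd(q₁,r₂) = gcd(q₂,r₁) = 1`. -/
theorem stmt_5 (ν : ℕ) (hν : 0 < ν) (Q R : ℝ) (hQ : 2 ≤ Q) (hR : 2 ≤ R) :
    ∃ (k : ℕ) (f : ℕ × ℕ → ℕ),
      (k : ℝ) ≤ (2 * Real.log (3 * Q * R)) ^ (ν ^ 2) ∧
      (∀ p : ℕ × ℕ, MemG ν Q R p → f p < k) ∧
      (∀ p₁ p₂ : ℕ × ℕ, MemG ν Q R p₁ → MemG ν Q R p₂ → f p₁ = f p₂ →
        Nat.Coprime p₁.1 p₂.2 ∧ Nat.Coprime p₂.1 p₁.2) := by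
  classical
  set m : ℝ := min Q R with hm
  set M : ℕ := ⌊m⌋₊ with hM
  have hm2 : (2:ℝ) ≤ m := le_min hQ hR
  have hM2 : 2 ≤ M := Nat.le_floor (by push_cast; exact hm2)
  have hmQ : m ≤ Q := min_le_left _ _
  have hmR : m ≤ R := min_le_right _ _
  have hMm : (M:ℝ) ≤ m := Nat.floor_le (by linarith)
  set P : Finset ℕ := (Finset.range (M+1)).filter Nat.Prime with hP
  set N : ℕ := P.card with hN
  have hex : ∃ u, N ≤ Nat.choose u (u/2) := by
    refine ⟨2*N, ?_⟩
    have h1 : (2*N)/2 = N := by omega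
    rw [h1]
    exact le_trans (Nat.lt_two_pow_self (n := N)).le (two_pow_le_choose N)
  set t : ℕ := Nat.find hex with ht
  have htspec : N ≤ Nat.choose t (t/2) := Nat.find_spec hex
  have hle : P.card ≤ (Finset.powersetCard (t/2) (Finset.range t)).card := by
    rw [Finset.card_powersetCard, Finset.card_range]
    exact htspec
  let emb : {x // x ∈ P} ↪ {x // x ∈ Finset.powersetCard (t/2) (Finset.range t)} :=
    P.equivFin.toEmbedding.trans ((Fin.castLEEmb hle).trans
      (Finset.powersetCard (t/2) (Finset.range t)).equivFin.symm.toEmbedding)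
  set w : ℕ → Finset ℕ := fun a => if h : a ∈ P then (emb ⟨a, h⟩).1 else ∅ with hw
  have hwmem : ∀ a ∈ P, w a ∈ Finset.powersetCard (t/2) (Finset.range t) := by
    intro a ha
    simp only [hw, dif_pos ha]
    exact (emb ⟨a, ha⟩).2
  have hwinj : ∀ a ∈ P, ∀ b ∈ P, w a = w b → a = b := by
    intro a ha b hb h
    simp only [hw, dif_pos ha, dif_pos hb] at h
    have := emb.injective (Subtype.ext h)
    exact congrArg Subtype.val this
  have hPm : ∀ a : ℕ, a.Prime → (a:ℝ) ≤ Q → (a:ℝ) ≤ R → a ∈ P := by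
    intro a hpa haQ haR
    have haM : a ≤ M := Nat.le_floor (le_min haQ haR)
    simp only [hP, Finset.mem_filter, Finset.mem_range]
    exact ⟨by omega, hpa⟩
  have hdiff : ∀ a b : ℕ, a.Prime → b.Prime → (a:ℝ) ≤ Q → (a:ℝ) ≤ R → (b:ℝ) ≤ Q → (b:ℝ) ≤ R →
      a ≠ b → (w a \ w b).Nonempty := by
    intro a b hpa hpb haQ haR hbQ hbR hab
    have haP := hPm a hpa haQ haR
    have hbP := hPm b hpb hbQ hbR
    by_contra hemp
    rw [Finset.not_nonempty_iff_eq_empty, Finset.sdiff_eq_empty_iff_subset] at hemp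
    have hca := (Finset.mem_powersetCard.mp (hwmem a haP)).2
    have hcb := (Finset.mem_powersetCard.mp (hwmem b hbP)).2
    have heq2 : w a = w b := Finset.eq_of_subset_of_card_le hemp (by rw [hca, hcb])
    exact hab (hwinj a haP b hbP heq2)
  have hwsub : ∀ a : ℕ, a.Prime → (a:ℝ) ≤ Q → (a:ℝ) ≤ R → w a ⊆ Finset.range t :=
    fun a hpa haQ haR => (Finset.mem_powersetCard.mp (hwmem a (hPm a hpa haQ haR))).1
  -- numeric bound on t
  have hAn : ((t:ℝ) + 3) ≤ 2 * Real.log (3 * Q * R) := by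
    have hQ0 : (0:ℝ) < Q := by linarith
    have hR0 : (0:ℝ) < R := by linarith
    have hlog : Real.log (3*Q*R) = Real.log 3 + Real.log Q + Real.log R := by
      rw [Real.log_mul (by positivity) (by positivity),
        Real.log_mul (by norm_num) (by positivity)]
    have hl3 : 1 < Real.log 3 := by
      have h1 : Real.exp 1 < 3 := lt_trans Real.exp_one_lt_d9 (by norm_num)
      calc (1:ℝ) = Real.log (Real.exp 1) := (Real.log_exp 1).symm
      _ < Real.log 3 := Real.log_lt_log (Real.exp_pos 1) h1
    have hl2a : (0.6931471803:ℝ) < Real.log 2 := Real.log_two_gt_d9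
    have hlQ2 : Real.log 2 ≤ Real.log Q := Real.log_le_log (by norm_num) hQ
    have hlR2 : Real.log 2 ≤ Real.log R := Real.log_le_log (by norm_num) hR
    rcases Nat.lt_or_ge M 3 with hM3 | hM3
    · -- M = 2 : t = 0
      have hMeq : M = 2 := by omega
      have ht0 : t = 0 := by
        have hN1 : N ≤ 1 := by
          rw [hN, hP, hMeq]
          decide
        exact Nat.le_zero.mp (Nat.find_min' hex (by simpa using hN1))
      rw [ht0, hlog]
      push_cast
      linarith
    · -- M ≥ 3
      set c : ℕ := Nat.clog 2 M with hc
      have hMle : M ≤ 2^c := Nat.le_pow_clog (by norm_num) M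
      have hc2 : 2 ≤ c := by
        by_contra hcc
        push_neg at hcc
        have : (2:ℕ)^c ≤ 2^1 := Nat.pow_le_pow_right (by norm_num) (by omega)
        omega
      have hpow_lt : (2:ℕ)^(c-1) < M :=
        Nat.pow_pred_clog_lt_self (by norm_num) (by omega)
      have hfind : t ≤ 2*(c-1) := by
        apply Nat.find_min' hex
        have h1 : (2*(c-1))/2 = c-1 := by omega
        rw [h1]
        have hNle : N ≤ (M+1)/2 := primes_card_le M
        have hp2 : M ≤ 2 * 2^(c-1) := by
          have h2 : (2:ℕ)^c = 2 * 2^(c-1) := by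
            rw [← pow_succ']
            congr 1
            omega
          omega
        have hN2 : N ≤ 2^(c-1) := by omega
        exact le_trans hN2 (two_pow_le_choose (c-1))
      have htR : (t:ℝ) ≤ 2*(c:ℝ) - 2 := by
        have h3 : (t:ℝ) ≤ ((2*(c-1) : ℕ) : ℝ) := Nat.cast_le.mpr hfind
        push_cast [Nat.cast_sub (by omega : 1 ≤ c)] at h3
        linarith
      have hclog : ((c:ℝ) - 1) * Real.log 2 < Real.log M := by
        have hcast : ((2:ℝ))^(c-1 : ℕ) < (M:ℝ) := by exact_mod_cast hpow_lt
        have hl := Real.log_lt_log (by positivity) hcast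
        rw [Real.log_pow] at hl
        rwa [Nat.cast_sub (by omega : 1 ≤ c), Nat.cast_one] at hl
      have hM0 : (0:ℝ) < (M:ℕ) := by positivity
      have hlM3 : Real.log 3 ≤ Real.log M :=
        Real.log_le_log (by norm_num) (by exact_mod_cast hM3)
      have hlMQ : Real.log M ≤ Real.log Q := Real.log_le_log hM0 (le_trans hMm hmQ)
      have hlMR : Real.log M ≤ Real.log R := Real.log_le_log hM0 (le_trans hMm hmR)
      rw [hlog]
      have e1 : (Real.log M - 1) * (2*Real.log 2 - 1) ≥ 0 :=
        mul_nonneg (by linarith) (by linarith)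
      have e2 : (Real.log 3 - 1) * Real.log 2 ≥ 0 :=
        mul_nonneg (by linarith) (by linarith)
      have hl20 : (0:ℝ) < Real.log 2 := by linarith
      have step : ((t:ℝ)+3) * Real.log 2 <
          (2*(Real.log 3 + Real.log Q + Real.log R)) * Real.log 2 := by
        have b1 : ((t:ℝ)+3) * Real.log 2 ≤ (2*(c:ℝ)+1) * Real.log 2 := by
          apply mul_le_mul_of_nonneg_right _ hl20.le
          linarith
        have b2 : (2*(c:ℝ)+1) * Real.log 2 < 2*Real.log M + 3*Real.log 2 := by
          nlinarith [hclog]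
        have b3 : 2*Real.log M + 3*Real.log 2 <
            (2*(Real.log 3 + 2*Real.log M)) * Real.log 2 := by
          nlinarith [e1, e2, hl2a, hlM3, hl3]
        have b4 : (2*(Real.log 3 + 2*Real.log M)) * Real.log 2 ≤
            (2*(Real.log 3 + Real.log Q + Real.log R)) * Real.log 2 := by
          apply mul_le_mul_of_nonneg_right _ hl20.le
          linarith
        linarith
      have hfin := lt_of_mul_lt_mul_right step hl20.le
      linarith
  -- the coloring
  have hcardD : Fintype.card (Fin ν → Fin ν → Fin (t+3)) = (t+3) ^ (ν^2) := by
    rw [Fintype.card_fun, Fintype.card_fun, Fintype.card_fin, Fintype.card_fin,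
      ← pow_mul, pow_two ν]
  set enc := Fintype.equivFinOfCardEq hcardD with henc
  refine ⟨(t+3) ^ (ν^2),
    fun p => if h : ∀ i j, EAux ν Q R w p i j < t+3 then
      (enc (fun i j => ⟨EAux ν Q R w p i j, h i j⟩)).1 else 0, ?_, ?_, ?_⟩
  · push_cast
    exact pow_le_pow_left₀ (by positivity) hAn _
  · intro p hp
    have hb : ∀ i j, EAux ν Q R w p i j < t+3 := EAux_lt ν t Q R w hwsub p hp
    dsimp only
    rw [dif_pos hb]
    exact (enc _).2
  · intro p₁ p₂ h₁ h₂ hf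
    have hb₁ : ∀ i j, EAux ν Q R w p₁ i j < t+3 := EAux_lt ν t Q R w hwsub p₁ h₁
    have hb₂ : ∀ i j, EAux ν Q R w p₂ i j < t+3 := EAux_lt ν t Q R w hwsub p₂ h₂
    dsimp only at hf
    rw [dif_pos hb₁, dif_pos hb₂] at hf
    have hmat := enc.injective (Fin.val_injective hf)
    have hEeq : ∀ i j, EAux ν Q R w p₁ i j = EAux ν Q R w p₂ i j := by
      intro i j
      have h3 := congrFun (congrFun hmat i) j
      simpa using h3
    exact ⟨key_coprime ν hν Q R w hdiff p₁ p₂ h₁ h₂ hEeq,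
           key_coprime ν hν Q R w hdiff p₂ p₁ h₂ h₁ (fun i j => (hEeq i j).symm)⟩
end

section
/- A-process (Weyl differencing for periodic functions): let q = q₁q₂ with gcd(q₁,q₂)=1, let Ψ₁ : Z/q₁Z → C and Ψ₂ : Z/q₂Z → C, and set Ψ = Ψ₁Ψ₂ (viewed as functions on Z). Let I be an interval of integers. Then |Σ_{n∈I} Ψ(n)|² ≪ (q₂/|I|) · U₂ · ( U₁ + Σ_{0<|l|<|I|/q₂} |Σ_{n, n+l q₂ ∈ I} Ψ₁(n) conj(Ψ₁(n+l q₂))| ), where U₁ = Σ_{n∈I} |Ψ₁(n)|² and U₂ = Σ_{n∈I₁} |Ψ₂(n)|² for some interval I₁ ⊇ I with |I₁| ≤ 2|I|. -/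
open Finset

private lemma cs_aux (s : Finset ℤ) (f g : ℤ → ℂ) :
    (‖∑ n ∈ s, f n * g n‖) ^ 2 ≤
      (∑ n ∈ s, (‖f n‖) ^ 2) * (∑ n ∈ s, (‖g n‖) ^ 2) := by
  have h1 : ‖∑ n ∈ s, f n * g n‖ ≤
      ∑ n ∈ s, ‖f n‖ * ‖g n‖ := by
    refine (norm_sum_le _ _).trans_eq ?_
    exact Finset.sum_congr rfl fun n _ => norm_mul _ _
  calc (‖∑ n ∈ s, f n * g n‖) ^ 2
      ≤ (∑ n ∈ s, ‖f n‖ * ‖g n‖) ^ 2 :=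
        pow_le_pow_left₀ (norm_nonneg _) h1 2
    _ ≤ _ := Finset.sum_mul_sq_le_sq_mul_sq s _ _

private lemma shiftA (Ψ₁ Ψ₂ : ℤ → ℂ) (q₂ : ℤ) (hq₂ : 0 < q₂)
    (hper : ∀ m n : ℤ, Ψ₂ (n + m * q₂) = Ψ₂ n)
    (a b H m : ℤ) (hm0 : 0 ≤ m) (hmH : m ≤ H - 1) :
    ∑ n ∈ (Finset.Icc (a - (H - 1) * q₂) b).filter
        (fun n => n + m * q₂ ∈ Finset.Icc a b), Ψ₂ n * Ψ₁ (n + m * q₂)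
      = ∑ k ∈ Finset.Icc a b, Ψ₁ k * Ψ₂ k := by
  refine Finset.sum_nbij' (fun n => n + m * q₂) (fun k => k - m * q₂) ?_ ?_ ?_ ?_ ?_
  · intro n hn
    exact (Finset.mem_filter.mp hn).2
  · intro k hk
    simp only [Finset.mem_filter, Finset.mem_Icc] at hk ⊢
    have h1 : 0 ≤ m * q₂ := mul_nonneg hm0 hq₂.le
    have h2 : m * q₂ ≤ (H - 1) * q₂ := mul_le_mul_of_nonneg_right hmH hq₂.le
    constructor
    · constructor <;> omega
    · omega
  · intro n _; ring
  · intro k _; ring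
  · intro n _
    rw [hper m n, mul_comm]

private lemma stepA (Ψ₁ Ψ₂ : ℤ → ℂ) (q₂ : ℤ) (hq₂ : 0 < q₂)
    (hper : ∀ m n : ℤ, Ψ₂ (n + m * q₂) = Ψ₂ n) (a b H : ℤ) (hH : 0 ≤ H) :
    (H : ℂ) * ∑ k ∈ Finset.Icc a b, Ψ₁ k * Ψ₂ k =
      ∑ n ∈ Finset.Icc (a - (H - 1) * q₂) b, Ψ₂ n *
        ∑ m ∈ (Finset.Icc (0:ℤ) (H - 1)).filter
          (fun m => n + m * q₂ ∈ Finset.Icc a b), Ψ₁ (n + m * q₂) := by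
  have h1 : ∀ n : ℤ, Ψ₂ n * (∑ m ∈ (Finset.Icc (0:ℤ) (H - 1)).filter
        (fun m => n + m * q₂ ∈ Finset.Icc a b), Ψ₁ (n + m * q₂))
      = ∑ m ∈ Finset.Icc (0:ℤ) (H - 1),
          if n + m * q₂ ∈ Finset.Icc a b then Ψ₂ n * Ψ₁ (n + m * q₂) else 0 := by
    intro n
    rw [Finset.mul_sum, Finset.sum_filter]
  rw [Finset.sum_congr rfl fun n _ => h1 n, Finset.sum_comm]
  have h2 : ∀ m ∈ Finset.Icc (0:ℤ) (H - 1),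
      (∑ n ∈ Finset.Icc (a - (H - 1) * q₂) b,
        if n + m * q₂ ∈ Finset.Icc a b then Ψ₂ n * Ψ₁ (n + m * q₂) else 0)
      = ∑ k ∈ Finset.Icc a b, Ψ₁ k * Ψ₂ k := by
    intro m hm
    rw [← Finset.sum_filter]
    rw [Finset.mem_Icc] at hm
    exact shiftA Ψ₁ Ψ₂ q₂ hq₂ hper a b H m hm.1 hm.2
  rw [Finset.sum_congr rfl h2, Finset.sum_const, Int.card_Icc]
  rw [nsmul_eq_mul]
  norm_num
  left
  exact_mod_cast (Int.toNat_of_nonneg hH).symm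

private lemma shiftB (Ψ₁ : ℤ → ℂ) (q₂ : ℤ) (hq₂ : 0 < q₂)
    (a b H m m' : ℤ) (hm'0 : 0 ≤ m') (hm'H : m' ≤ H - 1) :
    ∑ n ∈ (Finset.Icc (a - (H - 1) * q₂) b).filter
        (fun n => n + m * q₂ ∈ Finset.Icc a b ∧ n + m' * q₂ ∈ Finset.Icc a b),
        Ψ₁ (n + m * q₂) * (starRingEnd ℂ) (Ψ₁ (n + m' * q₂))
      = ∑ k ∈ (Finset.Icc a b).filter
          (fun k => k + (m - m') * q₂ ∈ Finset.Icc a b),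
          Ψ₁ (k + (m - m') * q₂) * (starRingEnd ℂ) (Ψ₁ k) := by
  refine Finset.sum_nbij' (fun n => n + m' * q₂) (fun k => k - m' * q₂) ?_ ?_ ?_ ?_ ?_
  · intro n hn
    simp only [Finset.mem_filter, Finset.mem_Icc] at hn ⊢
    obtain ⟨_, ⟨h1, h2⟩, h3, h4⟩ := hn
    have e : n + m' * q₂ + (m - m') * q₂ = n + m * q₂ := by ring
    exact ⟨⟨h3, h4⟩, by omega, by omega⟩
  · intro k hk
    simp only [Finset.mem_filter, Finset.mem_Icc] at hk ⊢
    obtain ⟨⟨h1, h2⟩, h3, h4⟩ := hk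
    have e : k - m' * q₂ + m * q₂ = k + (m - m') * q₂ := by ring
    have hge : 0 ≤ m' * q₂ := mul_nonneg hm'0 hq₂.le
    have hle : m' * q₂ ≤ (H - 1) * q₂ := mul_le_mul_of_nonneg_right hm'H hq₂.le
    exact ⟨⟨by omega, by omega⟩, by omega, by omega⟩
  · intro n _; ring
  · intro k _; ring
  · intro n _
    have e : n + m' * q₂ + (m - m') * q₂ = n + m * q₂ := by ring
    rw [e]

private lemma stepC2 (Ψ₁ : ℤ → ℂ) (q₂ : ℤ) (hq₂ : 0 < q₂) (a b H : ℤ) :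
    ∑ n ∈ Finset.Icc (a - (H - 1) * q₂) b,
        (∑ m ∈ (Finset.Icc (0:ℤ) (H - 1)).filter
            (fun m => n + m * q₂ ∈ Finset.Icc a b), Ψ₁ (n + m * q₂)) *
        (starRingEnd ℂ) (∑ m ∈ (Finset.Icc (0:ℤ) (H - 1)).filter
            (fun m => n + m * q₂ ∈ Finset.Icc a b), Ψ₁ (n + m * q₂))
      = ∑ m ∈ Finset.Icc (0:ℤ) (H - 1), ∑ m' ∈ Finset.Icc (0:ℤ) (H - 1),
          ∑ k ∈ (Finset.Icc a b).filter
            (fun k => k + (m - m') * q₂ ∈ Finset.Icc a b),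
            Ψ₁ (k + (m - m') * q₂) * (starRingEnd ℂ) (Ψ₁ k) := by
  have h1 : ∀ n : ℤ,
      (∑ m ∈ (Finset.Icc (0:ℤ) (H - 1)).filter
          (fun m => n + m * q₂ ∈ Finset.Icc a b), Ψ₁ (n + m * q₂)) *
      (starRingEnd ℂ) (∑ m ∈ (Finset.Icc (0:ℤ) (H - 1)).filter
          (fun m => n + m * q₂ ∈ Finset.Icc a b), Ψ₁ (n + m * q₂))
      = ∑ m ∈ Finset.Icc (0:ℤ) (H - 1), ∑ m' ∈ Finset.Icc (0:ℤ) (H - 1),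
          if n + m * q₂ ∈ Finset.Icc a b ∧ n + m' * q₂ ∈ Finset.Icc a b
          then Ψ₁ (n + m * q₂) * (starRingEnd ℂ) (Ψ₁ (n + m' * q₂)) else 0 := by
    intro n
    rw [map_sum, Finset.sum_filter, Finset.sum_filter, Finset.sum_mul_sum]
    refine Finset.sum_congr rfl fun m _ => Finset.sum_congr rfl fun m' _ => ?_
    rw [ite_zero_mul_ite_zero]
  rw [Finset.sum_congr rfl fun n _ => h1 n]
  rw [Finset.sum_comm]
  refine Finset.sum_congr rfl fun m hm => ?_
  rw [Finset.sum_comm]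
  refine Finset.sum_congr rfl fun m' hm' => ?_
  rw [← Finset.sum_filter]
  rw [Finset.mem_Icc] at hm'
  exact shiftB Ψ₁ q₂ hq₂ a b H m m' hm'.1 hm'.2

private lemma stepC3 (F : ℤ → ℝ) (hF : ∀ l, 0 ≤ F l) (H m : ℤ)
    (hm : m ∈ Finset.Icc (0:ℤ) (H - 1)) :
    ∑ m' ∈ Finset.Icc (0:ℤ) (H - 1), F (m - m')
      ≤ ∑ l ∈ Finset.Icc (-(H - 1)) (H - 1), F l := by
  rw [Finset.mem_Icc] at hm
  have h : ∑ m' ∈ Finset.Icc (0:ℤ) (H - 1), F (m - m')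
      = ∑ l ∈ Finset.Icc (m - (H - 1)) m, F l := by
    refine Finset.sum_nbij' (fun m' => m - m') (fun l => m - l) ?_ ?_ ?_ ?_ ?_
    · intro x hx; simp only [Finset.mem_Icc] at hx ⊢; omega
    · intro x hx; simp only [Finset.mem_Icc] at hx ⊢; omega
    · intro x _; ring
    · intro x _; ring
    · intro x _; rfl
  rw [h]
  apply Finset.sum_le_sum_of_subset_of_nonneg
  · intro l hl; simp only [Finset.mem_Icc] at hl ⊢; omega
  · intro l _ _; exact hF l

/-- `A`-process (Weyl differencing, Lemma 2.10): for `q = q₁q₂` with `(q₁,q₂)=1`,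
`Ψ = Ψ₁Ψ₂` with `Ψᵢ` periodic of period `qᵢ`, and an interval `I = [a,b]` of integers,
`|Σ_{n∈I} Ψ(n)|² ≪ (q₂/|I|)·U₂·(U₁ + Σ_{0<|l|<|I|/q₂} |Σ_{n,n+lq₂∈I} Ψ₁(n) conj(Ψ₁(n+lq₂))|)`
where `U₁ = Σ_{n∈I}|Ψ₁(n)|²` and `U₂ = Σ_{n∈I₁}|Ψ₂(n)|²` for some interval `I₁ ⊇ I`
with `|I₁| ≤ 2|I|`; the constant is absolute. -/
theorem stmt_6 :
    ∃ C : ℝ, 0 < C ∧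
      ∀ (q₁ q₂ : ℕ), 0 < q₁ → 0 < q₂ → Nat.Coprime q₁ q₂ →
        ∀ (Ψ₁ Ψ₂ : ℤ → ℂ),
          (∀ n : ℤ, Ψ₁ (n + q₁) = Ψ₁ n) → (∀ n : ℤ, Ψ₂ (n + q₂) = Ψ₂ n) →
          ∀ a b : ℤ, a ≤ b →
            ∃ a₁ b₁ : ℤ, a₁ ≤ a ∧ b ≤ b₁ ∧ b₁ - a₁ + 1 ≤ 2 * (b - a + 1) ∧
              (‖∑ n ∈ Finset.Icc a b, Ψ₁ n * Ψ₂ n‖) ^ 2 ≤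
                C * ((q₂ : ℝ) / ((b - a + 1 : ℤ) : ℝ)) *
                  (∑ n ∈ Finset.Icc a₁ b₁, (‖Ψ₂ n‖) ^ 2) *
                  ((∑ n ∈ Finset.Icc a b, (‖Ψ₁ n‖) ^ 2) +
                    ∑ l ∈ (Finset.Icc (-(b - a + 1)) (b - a + 1)).filter
                        (fun l : ℤ => l ≠ 0 ∧ |l| * (q₂ : ℤ) < b - a + 1),
                      ‖∑ n ∈ (Finset.Icc a b).filter
                          (fun n : ℤ => n + l * (q₂ : ℤ) ∈ Finset.Icc a b),
                        Ψ₁ n * (starRingEnd ℂ) (Ψ₁ (n + l * (q₂ : ℤ)))‖) := by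
  refine ⟨2, by norm_num, ?_⟩
  intro q₁ q₂ hq₁ hq₂ _ Ψ₁ Ψ₂ hper₁ hper₂ a b hab
  have hq₂' : (0:ℤ) < (q₂:ℤ) := by exact_mod_cast hq₂
  have hperm : ∀ m n : ℤ, Ψ₂ (n + m * (q₂:ℤ)) = Ψ₂ n := by
    intro m n
    have h : Function.Periodic Ψ₂ ((q₂:ℤ)) := hper₂
    exact h.int_mul m n
  have hNpos : (0:ℤ) < b - a + 1 := by omega
  have hNposR : (0:ℝ) < ((b - a + 1 : ℤ) : ℝ) := by exact_mod_cast hNpos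
  -- nonnegativity of the various sums
  have hU1 : (0:ℝ) ≤ ∑ n ∈ Finset.Icc a b, (‖Ψ₁ n‖) ^ 2 :=
    Finset.sum_nonneg fun n _ => sq_nonneg _
  have hL : (0:ℝ) ≤ ∑ l ∈ (Finset.Icc (-(b - a + 1)) (b - a + 1)).filter
        (fun l : ℤ => l ≠ 0 ∧ |l| * (q₂ : ℤ) < b - a + 1),
      ‖∑ n ∈ (Finset.Icc a b).filter
          (fun n : ℤ => n + l * (q₂ : ℤ) ∈ Finset.Icc a b),
        Ψ₁ n * (starRingEnd ℂ) (Ψ₁ (n + l * (q₂ : ℤ)))‖ :=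
    Finset.sum_nonneg fun l _ => norm_nonneg _
  by_cases hcase : b - a + 1 ≤ (q₂:ℤ)
  · -- short interval: Cauchy–Schwarz alone suffices
    refine ⟨a, b, le_refl a, le_refl b, by omega, ?_⟩
    have hcs := cs_aux (Finset.Icc a b) Ψ₁ Ψ₂
    have hU2 : (0:ℝ) ≤ ∑ n ∈ Finset.Icc a b, (‖Ψ₂ n‖) ^ 2 :=
      Finset.sum_nonneg fun n _ => sq_nonneg _
    have h1 : (1:ℝ) ≤ (q₂ : ℝ) / ((b - a + 1 : ℤ) : ℝ) := by
      rw [le_div_iff₀ hNposR, one_mul]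
      exact_mod_cast hcase
    nlinarith [mul_nonneg hU2 hL,
      mul_nonneg (mul_nonneg (sub_nonneg.mpr h1) hU2)
        (add_nonneg hU1 hL), mul_nonneg hU1 hU2]
  · push_neg at hcase
    set H : ℤ := (b - a + 1) / (q₂:ℤ) with hHdef
    have hH1 : 1 ≤ H := by
      rw [hHdef]
      rw [Int.le_ediv_iff_mul_le hq₂']
      omega
    have hHq : H * q₂ ≤ b - a + 1 := Int.ediv_mul_le _ (by omega)
    have hN2 : b - a + 1 < 2 * (H * q₂) := by
      have h := Int.lt_ediv_add_one_mul_self (b - a + 1) hq₂'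
      rw [← hHdef] at h
      nlinarith [hq₂', hH1]
    have hH1q : 0 ≤ (H - 1) * q₂ := mul_nonneg (by omega) hq₂'.le
    have hH1q' : (H - 1) * (q₂:ℤ) = H * q₂ - q₂ := by ring
    refine ⟨a - (H - 1) * q₂, b, by omega, le_refl b, by omega, ?_⟩
    -- abbreviations
    set I₁ : Finset ℤ := Finset.Icc (a - (H - 1) * (q₂:ℤ)) b with hI₁def
    set T : ℤ → ℂ := fun n => ∑ m ∈ (Finset.Icc (0:ℤ) (H - 1)).filter
        (fun m => n + m * (q₂:ℤ) ∈ Finset.Icc a b), Ψ₁ (n + m * (q₂:ℤ)) with hTdef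
    set S : ℝ := ‖∑ n ∈ Finset.Icc a b, Ψ₁ n * Ψ₂ n‖ with hSdef
    set U₁ : ℝ := ∑ n ∈ Finset.Icc a b, (‖Ψ₁ n‖) ^ 2 with hU₁def
    set U₂ : ℝ := ∑ n ∈ I₁, (‖Ψ₂ n‖) ^ 2 with hU₂def
    set L : ℝ := ∑ l ∈ (Finset.Icc (-(b - a + 1)) (b - a + 1)).filter
        (fun l : ℤ => l ≠ 0 ∧ |l| * (q₂ : ℤ) < b - a + 1),
      ‖∑ n ∈ (Finset.Icc a b).filter
          (fun n : ℤ => n + l * (q₂ : ℤ) ∈ Finset.Icc a b),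
        Ψ₁ n * (starRingEnd ℂ) (Ψ₁ (n + l * (q₂ : ℤ)))‖ with hLdef
    set ST : ℝ := ∑ n ∈ I₁, (‖T n‖) ^ 2 with hSTdef
    have hU2 : (0:ℝ) ≤ U₂ := Finset.sum_nonneg fun n _ => sq_nonneg _
    -- Step B : (H * S)² ≤ U₂ * ST
    have hB : ((H:ℝ) * S) ^ 2 ≤ U₂ * ST := by
      have hcs := cs_aux I₁ Ψ₂ T
      have habsH : ‖((H:ℤ):ℂ)‖ = (H:ℝ) := by
        rw [Complex.norm_intCast]
        exact_mod_cast abs_of_nonneg (by omega : (0:ℤ) ≤ H)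
      have hA := stepA Ψ₁ Ψ₂ (q₂:ℤ) hq₂' hperm a b H (by omega)
      rw [← hA, norm_mul, habsH] at hcs
      exact hcs
    -- Step C : ST ≤ H * (U₁ + L)
    have hC : ST ≤ (H:ℝ) * (U₁ + L) := by
      -- the W-function (absolute value of correlation sums)
      have hWconj : ∀ l : ℤ,
          ‖∑ n ∈ (Finset.Icc a b).filter
              (fun n : ℤ => n + l * (q₂:ℤ) ∈ Finset.Icc a b),
            Ψ₁ n * (starRingEnd ℂ) (Ψ₁ (n + l * (q₂:ℤ)))‖
          = ‖∑ k ∈ (Finset.Icc a b).filter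
              (fun k : ℤ => k + l * (q₂:ℤ) ∈ Finset.Icc a b),
            Ψ₁ (k + l * (q₂:ℤ)) * (starRingEnd ℂ) (Ψ₁ k)‖ := by
        intro l
        rw [← Complex.norm_conj, map_sum]
        congr 1
        refine Finset.sum_congr rfl fun n _ => ?_
        rw [map_mul, Complex.conj_conj, mul_comm]
      -- ST as abs of complex sum
      have hST1 : (ST : ℂ) = ∑ n ∈ I₁, T n * (starRingEnd ℂ) (T n) := by
        rw [hSTdef]
        push_cast
        refine Finset.sum_congr rfl fun n _ => ?_
        rw [Complex.mul_conj]
        norm_cast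
        exact Complex.sq_norm _
      have hST2 : ST = ‖((ST : ℝ) : ℂ)‖ := by
        rw [Complex.norm_real, Real.norm_eq_abs, abs_of_nonneg]
        exact Finset.sum_nonneg fun n _ => sq_nonneg _
      have hkey2 := stepC2 Ψ₁ (q₂:ℤ) hq₂' a b H
      have hST3 : ST ≤ ∑ m ∈ Finset.Icc (0:ℤ) (H - 1), ∑ m' ∈ Finset.Icc (0:ℤ) (H - 1),
          ‖∑ k ∈ (Finset.Icc a b).filter
            (fun k => k + (m - m') * (q₂:ℤ) ∈ Finset.Icc a b),
            Ψ₁ (k + (m - m') * (q₂:ℤ)) * (starRingEnd ℂ) (Ψ₁ k)‖ := by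
        rw [hST2]
        calc ‖((ST : ℝ) : ℂ)‖
            = ‖∑ m ∈ Finset.Icc (0:ℤ) (H - 1),
                ∑ m' ∈ Finset.Icc (0:ℤ) (H - 1),
                ∑ k ∈ (Finset.Icc a b).filter
                  (fun k => k + (m - m') * (q₂:ℤ) ∈ Finset.Icc a b),
                  Ψ₁ (k + (m - m') * (q₂:ℤ)) * (starRingEnd ℂ) (Ψ₁ k)‖ := by
              rw [hST1, hkey2]
          _ ≤ _ := by
              refine (norm_sum_le _ _).trans ?_
              exact Finset.sum_le_sum fun m _ => norm_sum_le _ _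
      -- bound the double sum by H * K
      set K : ℝ := ∑ l ∈ Finset.Icc (-(H - 1)) (H - 1),
          ‖∑ k ∈ (Finset.Icc a b).filter
            (fun k => k + l * (q₂:ℤ) ∈ Finset.Icc a b),
            Ψ₁ (k + l * (q₂:ℤ)) * (starRingEnd ℂ) (Ψ₁ k)‖ with hKdef
      have hST4 : ST ≤ (H:ℝ) * K := by
        refine hST3.trans ?_
        have hbd : ∀ m ∈ Finset.Icc (0:ℤ) (H - 1),
            (∑ m' ∈ Finset.Icc (0:ℤ) (H - 1),
              ‖∑ k ∈ (Finset.Icc a b).filter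
                (fun k => k + (m - m') * (q₂:ℤ) ∈ Finset.Icc a b),
                Ψ₁ (k + (m - m') * (q₂:ℤ)) * (starRingEnd ℂ) (Ψ₁ k)‖) ≤ K := by
          intro m hm
          exact stepC3 (fun l => ‖∑ k ∈ (Finset.Icc a b).filter
              (fun k => k + l * (q₂:ℤ) ∈ Finset.Icc a b),
              Ψ₁ (k + l * (q₂:ℤ)) * (starRingEnd ℂ) (Ψ₁ k)‖)
            (fun l => norm_nonneg _) H m hm
        refine (Finset.sum_le_sum hbd).trans_eq ?_
        rw [Finset.sum_const, Int.card_Icc, nsmul_eq_mul]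
        congr 1
        rw [show (H - 1 + 1 - 0 : ℤ) = H by ring]
        exact_mod_cast (Int.toNat_of_nonneg (by omega : (0:ℤ) ≤ H))
      -- bound K by U₁ + L
      have hKbound : K ≤ U₁ + L := by
        have h0mem : (0:ℤ) ∈ Finset.Icc (-(H - 1)) (H - 1) := by
          simp only [Finset.mem_Icc]; omega
        rw [hKdef, ← Finset.add_sum_erase _ _ h0mem]
        have hzero : ‖∑ k ∈ (Finset.Icc a b).filter
            (fun k => k + (0:ℤ) * (q₂:ℤ) ∈ Finset.Icc a b),
            Ψ₁ (k + (0:ℤ) * (q₂:ℤ)) * (starRingEnd ℂ) (Ψ₁ k)‖ = U₁ := by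
          have hfil : (Finset.Icc a b).filter
              (fun k => k + (0:ℤ) * (q₂:ℤ) ∈ Finset.Icc a b) = Finset.Icc a b := by
            refine Finset.filter_true_of_mem fun k hk => ?_
            simpa using hk
          rw [hfil]
          have : (∑ k ∈ Finset.Icc a b,
              Ψ₁ (k + (0:ℤ) * (q₂:ℤ)) * (starRingEnd ℂ) (Ψ₁ k)) = ((U₁ : ℝ) : ℂ) := by
            rw [hU₁def]
            push_cast
            refine Finset.sum_congr rfl fun k _ => ?_
            rw [show k + (0:ℤ) * (q₂:ℤ) = k by ring, Complex.mul_conj]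
            norm_cast
            exact (Complex.sq_norm _).symm
          rw [this, Complex.norm_real, Real.norm_eq_abs, abs_of_nonneg hU1]
        have herase : ∑ l ∈ (Finset.Icc (-(H - 1)) (H - 1)).erase 0,
            ‖∑ k ∈ (Finset.Icc a b).filter
              (fun k => k + l * (q₂:ℤ) ∈ Finset.Icc a b),
              Ψ₁ (k + l * (q₂:ℤ)) * (starRingEnd ℂ) (Ψ₁ k)‖ ≤ L := by
          rw [hLdef]
          rw [Finset.sum_congr rfl fun l _ => hWconj l]
          refine Finset.sum_le_sum_of_subset_of_nonneg ?_
            (fun l _ _ => norm_nonneg _)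
          intro l hl
          rw [Finset.mem_erase, Finset.mem_Icc] at hl
          obtain ⟨hlne, hl1, hl2⟩ := hl
          rw [Finset.mem_filter, Finset.mem_Icc]
          have habs : |l| ≤ H - 1 := abs_le.mpr ⟨hl1, hl2⟩
          have h2 : |l| * (q₂:ℤ) ≤ (H - 1) * (q₂:ℤ) :=
            mul_le_mul_of_nonneg_right habs hq₂'.le
          have h4 : |l| ≤ |l| * (q₂:ℤ) :=
            le_mul_of_one_le_right (abs_nonneg l) (by omega)
          have h5 : l ≤ |l| := le_abs_self l
          have h6 : -|l| ≤ l := neg_abs_le l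
          refine ⟨⟨by linarith, by linarith⟩, hlne, by linarith⟩
        linarith [herase, hzero]
      have hH0R : (0:ℝ) ≤ (H:ℝ) := by exact_mod_cast (by omega : (0:ℤ) ≤ H)
      exact hST4.trans (mul_le_mul_of_nonneg_left hKbound hH0R)
    -- final assembly
    have hHposR : (0:ℝ) < (H:ℝ) := by exact_mod_cast (by omega : (0:ℤ) < H)
    have hkey : (H:ℝ) * S ^ 2 ≤ U₂ * (U₁ + L) := by
      rw [← mul_le_mul_iff_right₀ hHposR]
      nlinarith [hB, mul_le_mul_of_nonneg_left hC hU2]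
    have hNR : ((b - a + 1 : ℤ):ℝ) ≤ 2 * (H:ℝ) * (q₂:ℝ) := by
      have : ((b - a + 1 : ℤ):ℝ) ≤ ((2 * (H * q₂) : ℤ) : ℝ) := by
        exact_mod_cast hN2.le
      push_cast at this ⊢
      linarith
    have hq₂R : (0:ℝ) ≤ (q₂:ℝ) := by positivity
    have hgoal_eq : 2 * ((q₂:ℝ) / ((b - a + 1 : ℤ):ℝ)) * U₂ * (U₁ + L)
        = 2 * (q₂:ℝ) * U₂ * (U₁ + L) / ((b - a + 1 : ℤ):ℝ) := by ring
    rw [hgoal_eq, le_div_iff₀ hNposR]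
    nlinarith [mul_le_mul_of_nonneg_left hkey (by linarith : (0:ℝ) ≤ 2 * (q₂:ℝ)),
      mul_le_mul_of_nonneg_left hNR (sq_nonneg S)]
end

section
/- Change-of-moduli congruence (simplified form of Lemma 2.6): let q₁, q₂, r₁, r₂, s, n₁, n₂, a₁, a₂ be integers with q₁, q₂, r₁, r₂, s pairwise coprime, gcd(n₁, q₁r₁s) = gcd(n₂, q₂r₂s) = gcd(n₁,n₂) = 1, and n₁ ≡ n₂ (mod s). Suppose ϱ is a solution modulo q₁q₂r₁r₂s to the system ϱn₁ ≡ a₁ (mod r₁s), ϱn₂ ≡ a₁ (mod r₂s), ϱn₁ ≡ a₂ (mod q₁), ϱn₂ ≡ a₂ (mod q₂). Then ϱ/(q₁q₂r₁r₂s) ≡ a₁·((n₁−n₂)/s)·(q₁r₁n₂)^{−1}/(q₂r₂n₁) + (a₂−a₁)·(q₂r₁r₂sn₁)^{−1}/q₁ + (a₂−a₁)·(q₁r₁r₂sn₂)^{−1}/q₂ + a₁/(q₁q₂r₁r₂sn₁) (mod 1), where (m)^{−1} denotes the multiplicative inverse of m modulo the denominator of the fraction it appears in. -/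
/-- Change-of-moduli congruence (Lemma 2.6, simplified as in (3.8) of the paper):
with `q₁,q₂,r₁,r₂,s` pairwise coprime positive integers, `n₁,n₂` nonzero integers
coprime to the indicated moduli and to each other with `s ∣ n₁ − n₂`, and `ϱ` solving
the displayed system, one has
`ϱ/(q₁q₂r₁r₂s) ≡ a₁·((n₁−n₂)/s)·A/(q₂r₂n₁) + (a₂−a₁)·B/q₁ + (a₂−a₁)·C/q₂
 + a₁/(q₁q₂r₁r₂sn₁) (mod 1)`,
where `A,B,C` are inverses of `q₁r₁n₂ mod q₂r₂n₁`, of `q₂r₁r₂sn₁ mod q₁`, and of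
`q₁r₁r₂sn₂ mod q₂`, respectively. -/
theorem stmt_10 (q₁ q₂ r₁ r₂ s n₁ n₂ a₁ a₂ ϱ A B C : ℤ)
    (hq₁ : 0 < q₁) (hq₂ : 0 < q₂) (hr₁ : 0 < r₁) (hr₂ : 0 < r₂) (hs : 0 < s)
    (h12 : IsCoprime q₁ q₂) (h13 : IsCoprime q₁ r₁) (h14 : IsCoprime q₁ r₂)
    (h15 : IsCoprime q₁ s) (h23 : IsCoprime q₂ r₁) (h24 : IsCoprime q₂ r₂)
    (h25 : IsCoprime q₂ s) (h34 : IsCoprime r₁ r₂) (h35 : IsCoprime r₁ s)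
    (h45 : IsCoprime r₂ s)
    (hn₁ : n₁ ≠ 0) (hn₂ : n₂ ≠ 0)
    (hn₁co : IsCoprime n₁ (q₁ * r₁ * s)) (hn₂co : IsCoprime n₂ (q₂ * r₂ * s))
    (hn₁₂ : IsCoprime n₁ n₂)
    (ha₁ : IsCoprime a₁ (r₁ * r₂ * s)) (ha₂ : IsCoprime a₂ (q₁ * q₂))
    (hns : n₁ ≡ n₂ [ZMOD s])
    (hϱ1 : ϱ * n₁ ≡ a₁ [ZMOD r₁ * s]) (hϱ2 : ϱ * n₂ ≡ a₁ [ZMOD r₂ * s])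
    (hϱ3 : ϱ * n₁ ≡ a₂ [ZMOD q₁]) (hϱ4 : ϱ * n₂ ≡ a₂ [ZMOD q₂])
    (hA : (q₁ * r₁ * n₂) * A ≡ 1 [ZMOD q₂ * r₂ * n₁])
    (hB : (q₂ * r₁ * r₂ * s * n₁) * B ≡ 1 [ZMOD q₁])
    (hC : (q₁ * r₁ * r₂ * s * n₂) * C ≡ 1 [ZMOD q₂]) :
    ∃ z : ℤ,
      (ϱ : ℚ) / ((q₁ * q₂ * r₁ * r₂ * s : ℤ) : ℚ)
        - ((a₁ : ℚ) * (((n₁ - n₂) / s : ℚ)) * (A : ℚ) / ((q₂ * r₂ * n₁ : ℤ) : ℚ)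
          + ((a₂ - a₁ : ℤ) : ℚ) * (B : ℚ) / (q₁ : ℚ)
          + ((a₂ - a₁ : ℤ) : ℚ) * (C : ℚ) / (q₂ : ℚ)
          + (a₁ : ℚ) / ((q₁ * q₂ * r₁ * r₂ * s * n₁ : ℤ) : ℚ)) = (z : ℚ) := by
  obtain ⟨k, hk⟩ : s ∣ n₁ - n₂ := hns.symm.dvd
  obtain ⟨w1, hw1⟩ : r₁ * s ∣ a₁ - ϱ * n₁ := hϱ1.dvd
  obtain ⟨w2, hw2⟩ : r₂ * s ∣ a₁ - ϱ * n₂ := hϱ2.dvd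
  obtain ⟨w3, hw3⟩ : q₁ ∣ a₂ - ϱ * n₁ := hϱ3.dvd
  obtain ⟨w4, hw4⟩ : q₂ ∣ a₂ - ϱ * n₂ := hϱ4.dvd
  obtain ⟨wA, hwA⟩ : q₂ * r₂ * n₁ ∣ 1 - q₁ * r₁ * n₂ * A := hA.dvd
  obtain ⟨wB, hwB⟩ : q₁ ∣ 1 - q₂ * r₁ * r₂ * s * n₁ * B := hB.dvd
  obtain ⟨wC, hwC⟩ : q₂ ∣ 1 - q₁ * r₁ * r₂ * s * n₂ * C := hC.dvd
  set E : ℤ := ϱ * n₁ - a₁ * k * A * (q₁ * r₁ * s)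
      - (a₂ - a₁) * B * (q₂ * r₁ * r₂ * s * n₁)
      - (a₂ - a₁) * C * (q₁ * r₁ * r₂ * s * n₁) - a₁ with hE
  have hn₁q₁ : IsCoprime n₁ q₁ := hn₁co.of_isCoprime_of_dvd_right ⟨r₁ * s, by ring⟩
  have hn₁r₁ : IsCoprime n₁ r₁ := hn₁co.of_isCoprime_of_dvd_right ⟨q₁ * s, by ring⟩
  have hn₁s : IsCoprime n₁ s := hn₁co.of_isCoprime_of_dvd_right ⟨q₁ * r₁, by ring⟩
  have hn₂q₂ : IsCoprime n₂ q₂ := hn₂co.of_isCoprime_of_dvd_right ⟨r₂ * s, by ring⟩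
  have hn₂r₂ : IsCoprime n₂ r₂ := hn₂co.of_isCoprime_of_dvd_right ⟨q₂ * s, by ring⟩
  -- divisibility by q₁
  have h1 : q₁ ∣ E :=
    ⟨-w3 - a₁ * k * A * (r₁ * s) + (a₂ - a₁) * wB - (a₂ - a₁) * C * (r₁ * r₂ * s * n₁), by
      linear_combination (-1 : ℤ) * hw3 + (a₂ - a₁) * hwB⟩
  -- divisibility by r₁ * s
  have h2 : r₁ * s ∣ E :=
    ⟨-w1 - a₁ * k * A * q₁ - (a₂ - a₁) * B * (q₂ * r₂ * n₁) - (a₂ - a₁) * C * (q₁ * r₂ * n₁), by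
      linear_combination (-1 : ℤ) * hw1⟩
  -- divisibility by q₂ * r₂ * n₁
  set F : ℤ := ϱ - a₁ * A * (q₁ * r₁) - (a₂ - a₁) * C * (q₁ * r₁ * r₂ * s) with hF
  have hq2F : q₂ ∣ n₂ * F :=
    ⟨-w4 + a₁ * (r₂ * n₁) * wA + (a₂ - a₁) * wC, by
      linear_combination (-1 : ℤ) * hw4 + a₁ * hwA + (a₂ - a₁) * hwC⟩
  have hq2F' : q₂ ∣ F := (hn₂q₂.symm).dvd_of_dvd_mul_left hq2F
  have hr2F : r₂ ∣ n₂ * F :=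
    ⟨-(s * w2) + a₁ * (q₂ * n₁) * wA - (a₂ - a₁) * C * (q₁ * r₁ * s * n₂), by
      linear_combination (-1 : ℤ) * hw2 + a₁ * hwA⟩
  have hr2F' : r₂ ∣ F := (hn₂r₂.symm).dvd_of_dvd_mul_left hr2F
  obtain ⟨g, hg⟩ : q₂ * r₂ ∣ F := h24.mul_dvd hq2F' hr2F'
  have h3 : q₂ * r₂ * n₁ ∣ E :=
    ⟨g - a₁ * wA - (a₂ - a₁) * B * (r₁ * s), by
      linear_combination n₁ * hg + (-a₁) * hwA + a₁ * A * q₁ * r₁ * hk⟩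
  -- combine
  have c1 : IsCoprime q₁ (r₁ * s) := h13.mul_right h15
  have c2 : IsCoprime q₁ (q₂ * r₂ * n₁) := (h12.mul_right h14).mul_right hn₁q₁.symm
  have c3 : IsCoprime (r₁ * s) (q₂ * r₂ * n₁) :=
    IsCoprime.mul_left ((h23.symm.mul_right h34).mul_right hn₁r₁.symm)
      ((h25.symm.mul_right h45.symm).mul_right hn₁s.symm)
  obtain ⟨z, hz⟩ : (q₁ * (r₁ * s)) * (q₂ * r₂ * n₁) ∣ E :=
    (c2.mul_left c3).mul_dvd (c1.mul_dvd h1 h2) h3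
  refine ⟨z, ?_⟩
  have hq₁0 : (q₁ : ℚ) ≠ 0 := Int.cast_ne_zero.mpr hq₁.ne'
  have hq₂0 : (q₂ : ℚ) ≠ 0 := Int.cast_ne_zero.mpr hq₂.ne'
  have hr₁0 : (r₁ : ℚ) ≠ 0 := Int.cast_ne_zero.mpr hr₁.ne'
  have hr₂0 : (r₂ : ℚ) ≠ 0 := Int.cast_ne_zero.mpr hr₂.ne'
  have hs0 : (s : ℚ) ≠ 0 := Int.cast_ne_zero.mpr hs.ne'
  have hn₁0 : (n₁ : ℚ) ≠ 0 := Int.cast_ne_zero.mpr hn₁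
  have hkQ : ((n₁ : ℚ) - n₂) / s = k := by
    rw [div_eq_iff hs0]
    exact_mod_cast hk.trans (mul_comm s k)
  rw [hE] at hz
  have hzQ : (ϱ : ℚ) * n₁ - a₁ * k * A * (q₁ * r₁ * s)
      - (a₂ - a₁) * B * (q₂ * r₁ * r₂ * s * n₁)
      - (a₂ - a₁) * C * (q₁ * r₁ * r₂ * s * n₁) - a₁
      = (q₁ * (r₁ * s)) * (q₂ * r₂ * n₁) * z := by exact_mod_cast hz
  push_cast
  rw [hkQ]
  field_simp
  linear_combination hzQ
end
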